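/- The gradient of the symmetric softmax is 1-Lipschitz from the ℓ∞ norm to the ℓ₁ norm: for all x, y ∈ ℝ^d, ‖∇lmax(x) − ∇lmax(y)‖₁ ≤ ‖x − y‖_∞. -/

import Mathlib

/-- `linf x` is the maximum absolute entry of the vector `x`, i.e. `‖x‖_∞`. -/
noncomputable def linf {ι : Type*} [Fintype ι] (x : ι → ℝ) : ℝ := ⨆ i, |x i|

/-- `l1 x` is the sum of absolute entries of the vector `x`, i.e. `‖x‖₁`. -/
def l1 {ι : Type*} [Fintype ι] (x : ι → ℝ) : ℝ := ∑ i, |x i|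

/-- The symmetric softmax: `lmax(x) = log (Σ_i (e^{x_i} + e^{-x_i}))`. -/
noncomputable def lmax {ι : Type*} [Fintype ι] (x : ι → ℝ) : ℝ :=
  Real.log (∑ i, (Real.exp (x i) + Real.exp (-x i)))

/-- The gradient of the symmetric softmax: its `i`-th component is
`(e^{x_i} − e^{-x_i}) / Σ_j (e^{x_j} + e^{-x_j})`. -/
noncomputable def lmaxGrad {ι : Type*} [Fintype ι] (x : ι → ℝ) : ι → ℝ :=
  fun i => (Real.exp (x i) - Real.exp (-x i)) / ∑ j, (Real.exp (x j) + Real.exp (-x j))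

open Finset Real

theorem cov_bound {κ : Type*} [Fintype κ] (w a b : κ → ℝ) (hw : ∀ i, 0 ≤ w i)
    (hw1 : ∑ i, w i = 1) (ha : ∀ i, a i ^ 2 ≤ 1) {M : ℝ} (hM : 0 ≤ M)
    (hb : ∀ i, |b i| ≤ M) :
    |∑ i, w i * (a i * b i) - (∑ i, w i * a i) * (∑ i, w i * b i)| ≤ M := by
  set am := ∑ i, w i * a i with ham
  set bm := ∑ i, w i * b i with hbm
  have key : ∑ i, w i * ((a i - am) * (b i - bm))
      = ∑ i, w i * (a i * b i) - am * bm := by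
    have expand : ∀ i, w i * ((a i - am) * (b i - bm))
        = w i * (a i * b i) - (w i * a i) * bm - am * (w i * b i) + am * bm * w i := by
      intro i; ring
    simp_rw [expand, Finset.sum_add_distrib, Finset.sum_sub_distrib,
      ← Finset.sum_mul, ← Finset.mul_sum, hw1, ← ham, ← hbm]
    ring
  have ea : ∑ i, w i * (a i - am) ^ 2 ≤ 1 := by
    have e1 : ∑ i, w i * (a i - am) ^ 2 = ∑ i, w i * a i ^ 2 - am ^ 2 := by
      have expand : ∀ i, w i * (a i - am) ^ 2
          = w i * a i ^ 2 - 2 * am * (w i * a i) + am ^ 2 * w i := by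
        intro i; ring
      simp_rw [expand, Finset.sum_add_distrib, Finset.sum_sub_distrib,
        ← Finset.mul_sum, hw1, ← ham]
      ring
    have e2 : ∑ i, w i * a i ^ 2 ≤ 1 := by
      calc ∑ i, w i * a i ^ 2 ≤ ∑ i, w i * 1 := by
            exact Finset.sum_le_sum fun i _ => mul_le_mul_of_nonneg_left (ha i) (hw i)
        _ = 1 := by simp [hw1]
    nlinarith [sq_nonneg am]
  have eb : ∑ i, w i * (b i - bm) ^ 2 ≤ M ^ 2 := by
    have e1 : ∑ i, w i * (b i - bm) ^ 2 = ∑ i, w i * b i ^ 2 - bm ^ 2 := by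
      have expand : ∀ i, w i * (b i - bm) ^ 2
          = w i * b i ^ 2 - 2 * bm * (w i * b i) + bm ^ 2 * w i := by
        intro i; ring
      simp_rw [expand, Finset.sum_add_distrib, Finset.sum_sub_distrib,
        ← Finset.mul_sum, hw1, ← hbm]
      ring
    have e2 : ∑ i, w i * b i ^ 2 ≤ M ^ 2 := by
      calc ∑ i, w i * b i ^ 2 ≤ ∑ i, w i * M ^ 2 := by
            refine Finset.sum_le_sum fun i _ => mul_le_mul_of_nonneg_left ?_ (hw i)
            have := hb i
            nlinarith [abs_nonneg (b i), sq_abs (b i)]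
        _ = M ^ 2 := by rw [← Finset.sum_mul, hw1, one_mul]
    nlinarith [sq_nonneg bm]
  have cs : (∑ i, w i * ((a i - am) * (b i - bm))) ^ 2
      ≤ (∑ i, w i * (a i - am) ^ 2) * ∑ i, w i * (b i - bm) ^ 2 := by
    have := sum_mul_sq_le_sq_mul_sq Finset.univ
      (fun i => Real.sqrt (w i) * (a i - am)) (fun i => Real.sqrt (w i) * (b i - bm))
    have e : ∀ i : κ, (Real.sqrt (w i) * (a i - am)) * (Real.sqrt (w i) * (b i - bm))
        = w i * ((a i - am) * (b i - bm)) := by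
      intro i
      rw [show (Real.sqrt (w i) * (a i - am)) * (Real.sqrt (w i) * (b i - bm))
        = (Real.sqrt (w i) * Real.sqrt (w i)) * ((a i - am) * (b i - bm)) by ring,
        Real.mul_self_sqrt (hw i)]
    have e2 : ∀ i : κ, (Real.sqrt (w i) * (a i - am)) ^ 2 = w i * (a i - am) ^ 2 := by
      intro i
      rw [mul_pow, Real.sq_sqrt (hw i)]
    have e3 : ∀ i : κ, (Real.sqrt (w i) * (b i - bm)) ^ 2 = w i * (b i - bm) ^ 2 := by
      intro i
      rw [mul_pow, Real.sq_sqrt (hw i)]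
    simpa only [e, e2, e3] using this
  rw [← key]
  have hnn : (0:ℝ) ≤ ∑ i, w i * (b i - bm) ^ 2 :=
    Finset.sum_nonneg fun i _ => mul_nonneg (hw i) (sq_nonneg _)
  refine abs_le_of_sq_le_sq ?_ hM
  calc (∑ i, w i * ((a i - am) * (b i - bm))) ^ 2
      ≤ (∑ i, w i * (a i - am) ^ 2) * ∑ i, w i * (b i - bm) ^ 2 := cs
    _ ≤ 1 * M ^ 2 := mul_le_mul ea eb hnn zero_le_one
    _ = M ^ 2 := one_mul _

set_option maxHeartbeats 1000000 in
/-- The gradient of the symmetric softmax is 1-Lipschitz from `‖·‖_∞` to `‖·‖₁`: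
`‖∇lmax(x) − ∇lmax(y)‖₁ ≤ ‖x − y‖_∞`. -/
theorem lmaxGrad_lipschitz {d : ℕ} (hd : 1 ≤ d) (x y : Fin d → ℝ) :
    l1 (fun i => lmaxGrad x i - lmaxGrad y i) ≤ linf (fun i => x i - y i) := by
  have hne : Nonempty (Fin d) := Fin.pos_iff_nonempty.mp hd
  set v : Fin d → ℝ := fun i => x i - y i with hv
  set M : ℝ := linf v with hMdef
  have hMeq : M = ⨆ i, |v i| := rfl
  have hvM : ∀ i, |v i| ≤ M := by
    intro i
    rw [hMeq]
    exact le_ciSup (f := fun i => |v i|) (Set.Finite.bddAbove (Set.finite_range _)) i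
  have hM0 : 0 ≤ M := le_trans (abs_nonneg _) (hvM (Classical.arbitrary _))
  -- the path
  set z : ℝ → Fin d → ℝ := fun t i => y i + t * v i with hz
  set E : ℝ → ℝ := fun t => ∑ j, (Real.exp (z t j) + Real.exp (-z t j)) with hE
  have hEpos : ∀ t, 0 < E t := by
    intro t
    exact Finset.sum_pos (fun j _ => by positivity) Finset.univ_nonempty
  -- signs
  set ε : Fin d → ℝ := fun i => if lmaxGrad y i ≤ lmaxGrad x i then 1 else -1 with hε
  have hεsq : ∀ i, ε i ^ 2 = 1 := by
    intro i; simp only [hε]; split <;> norm_num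
  have hεabs : ∀ i, ε i * (lmaxGrad x i - lmaxGrad y i) = |lmaxGrad x i - lmaxGrad y i| := by
    intro i; simp only [hε]
    split_ifs with h
    · rw [one_mul, abs_of_nonneg (by linarith)]
    · rw [neg_one_mul, abs_of_neg (by push_neg at h; linarith)]
  set N : ℝ → ℝ := fun t => ∑ i, ε i * (Real.exp (z t i) - Real.exp (-z t i)) with hN
  set h : ℝ → ℝ := fun t => N t / E t with hh
  set N' : ℝ → ℝ := fun t => ∑ i, ε i * (v i * (Real.exp (z t i) + Real.exp (-z t i))) with hN'
  set E' : ℝ → ℝ := fun t => ∑ j, v j * (Real.exp (z t j) - Real.exp (-z t j)) with hE'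
  -- derivatives
  have hzderiv : ∀ t i, HasDerivAt (fun s => z s i) (v i) t := by
    intro t i
    exact (((hasDerivAt_id t).mul_const (v i)).const_add (y i)).congr_deriv (one_mul _)
  have hNderiv : ∀ t, HasDerivAt N (N' t) t := by
    intro t
    refine HasDerivAt.fun_sum fun i _ => ?_
    have he1 : HasDerivAt (fun s => Real.exp (z s i)) (Real.exp (z t i) * v i) t :=
      (hzderiv t i).exp
    have he2 : HasDerivAt (fun s => Real.exp (-z s i)) (Real.exp (-z t i) * (-v i)) t :=
      (hzderiv t i).neg.exp
    have : HasDerivAt (fun s => ε i * (Real.exp (z s i) - Real.exp (-z s i))) _ t :=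
      ((he1.sub he2).const_mul (ε i))
    exact this.congr_deriv (by ring)
  have hEderiv : ∀ t, HasDerivAt E (E' t) t := by
    intro t
    refine HasDerivAt.fun_sum fun j _ => ?_
    have he1 : HasDerivAt (fun s => Real.exp (z s j)) (Real.exp (z t j) * v j) t :=
      (hzderiv t j).exp
    have he2 : HasDerivAt (fun s => Real.exp (-z s j)) (Real.exp (-z t j) * (-v j)) t :=
      (hzderiv t j).neg.exp
    exact (he1.add he2).congr_deriv (by ring)
  have hhderiv : ∀ t, HasDerivAt h ((N' t * E t - N t * E' t) / E t ^ 2) t :=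
    fun t => (hNderiv t).div (hEderiv t) (ne_of_gt (hEpos t))
  -- derivative bound via covariance
  have hbound : ∀ t, |(N' t * E t - N t * E' t) / E t ^ 2| ≤ M := by
    intro t
    set w : Fin d × Bool → ℝ :=
      fun p => (if p.2 then Real.exp (z t p.1) else Real.exp (-z t p.1)) / E t with hw
    set a : Fin d × Bool → ℝ := fun p => if p.2 then ε p.1 else -ε p.1 with ha
    set b : Fin d × Bool → ℝ := fun p => if p.2 then v p.1 else -v p.1 with hb
    have hwpos : ∀ p, 0 ≤ w p := by
      intro p
      refine div_nonneg ?_ (hEpos t).le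
      split <;> positivity
    have hw1 : ∑ p, w p = 1 := by
      rw [Fintype.sum_prod_type]
      simp only [hw, Fintype.sum_bool, eq_self_iff_true, if_true, Bool.false_eq_true, if_false]
      simp_rw [← add_div]
      rw [← Finset.sum_div]
      exact div_self (ne_of_gt (hEpos t))
    have hasq : ∀ p, a p ^ 2 ≤ 1 := by
      intro p
      simp only [ha]
      split
      · exact le_of_eq (hεsq p.1)
      · rw [neg_pow]; simp [hεsq p.1]
    have hbM : ∀ p, |b p| ≤ M := by
      intro p
      simp only [hb]
      split
      · exact hvM p.1
      · rw [abs_neg]; exact hvM p.1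
    have key := cov_bound w a b hwpos hw1 hasq hM0 hbM
    have hEne : E t ≠ 0 := ne_of_gt (hEpos t)
    have combo : ∀ (X Y u u' : ℝ), (X / E t * u + Y / E t * u') * E t = X * u + Y * u' := by
      intro X Y u u'
      field_simp
    have e1 : ∑ p, w p * (a p * b p) = N' t / E t := by
      simp only [hN']
      rw [eq_div_iff (ne_of_gt (hEpos t)), Fintype.sum_prod_type, Finset.sum_mul]
      refine Finset.sum_congr rfl fun i _ => ?_
      simp only [hw, ha, hb, Fintype.sum_bool, eq_self_iff_true, if_true, Bool.false_eq_true, if_false]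
      rw [combo]
      ring
    have e2' : ∑ p, w p * a p = N t / E t := by
      simp only [hN]
      rw [eq_div_iff (ne_of_gt (hEpos t)), Fintype.sum_prod_type, Finset.sum_mul]
      refine Finset.sum_congr rfl fun i _ => ?_
      simp only [hw, ha, hb, Fintype.sum_bool, eq_self_iff_true, if_true, Bool.false_eq_true, if_false]
      rw [combo]
      ring
    have e3 : ∑ p, w p * b p = E' t / E t := by
      simp only [hE']
      rw [eq_div_iff (ne_of_gt (hEpos t)), Fintype.sum_prod_type, Finset.sum_mul]
      refine Finset.sum_congr rfl fun i _ => ?_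
      simp only [hw, ha, hb, Fintype.sum_bool, eq_self_iff_true, if_true, Bool.false_eq_true, if_false]
      rw [combo]
      ring
    rw [e1, e2', e3] at key
    have efinal : (N' t * E t - N t * E' t) / E t ^ 2
        = N' t / E t - N t / E t * (E' t / E t) := by
      field_simp
    rw [efinal]
    exact key
  -- mean value inequality
  have hmvt : ‖h 1 - h 0‖ ≤ M * (1 - 0) :=
    norm_image_sub_le_of_norm_deriv_le_segment' (a := 0) (b := 1)
      (f' := fun t => (N' t * E t - N t * E' t) / E t ^ 2)
      (fun t _ => (hhderiv t).hasDerivWithinAt)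
      (fun t _ => by rw [Real.norm_eq_abs]; exact hbound t)
      1 (Set.right_mem_Icc.mpr zero_le_one)
  -- identify endpoints
  have hz1 : ∀ i, z 1 i = x i := by
    intro i; show y i + 1 * (x i - y i) = x i; ring
  have hz0 : ∀ i, z 0 i = y i := by
    intro i; show y i + 0 * (x i - y i) = y i; ring
  have hE1 : E 1 = ∑ j, (Real.exp (x j) + Real.exp (-x j)) :=
    Finset.sum_congr rfl fun j _ => by rw [hz1 j]
  have hE0 : E 0 = ∑ j, (Real.exp (y j) + Real.exp (-y j)) :=
    Finset.sum_congr rfl fun j _ => by rw [hz0 j]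
  have hN1 : N 1 = ∑ i, ε i * (Real.exp (x i) - Real.exp (-x i)) :=
    Finset.sum_congr rfl fun i _ => by rw [hz1 i]
  have hN0 : N 0 = ∑ i, ε i * (Real.exp (y i) - Real.exp (-y i)) :=
    Finset.sum_congr rfl fun i _ => by rw [hz0 i]
  have hend1 : h 1 = ∑ i, ε i * lmaxGrad x i := by
    show N 1 / E 1 = _
    rw [hN1, hE1, Finset.sum_div]
    exact Finset.sum_congr rfl fun i _ => mul_div_assoc _ _ _
  have hend0 : h 0 = ∑ i, ε i * lmaxGrad y i := by
    show N 0 / E 0 = _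
    rw [hN0, hE0, Finset.sum_div]
    exact Finset.sum_congr rfl fun i _ => mul_div_assoc _ _ _
  have hfin : l1 (fun i => lmaxGrad x i - lmaxGrad y i) = h 1 - h 0 := by
    rw [hend1, hend0, ← Finset.sum_sub_distrib]
    refine Finset.sum_congr rfl fun i _ => ?_
    rw [← hεabs i]
    ring
  rw [hfin]
  have habs : |h 1 - h 0| ≤ M := by
    have := hmvt
    rw [Real.norm_eq_abs] at this
    linarith
  exact le_trans (le_abs_self _) habs
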